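/- arXiv:1003.1670 — 5 statements merged into one kernel-verified Lean document; each statement's English description precedes it below -/
import Mathlib

section
/- Let n be a positive integer, let M be an invertible complex n×n matrix, and let η be a vector in ℂⁿ such that I - M M* = η η*. Then 1 - ‖η‖² > 0. -/
/-- Embedding of a plain vector into Euclidean space (to use the Euclidean norm). -/
noncomputable def euc {n : ℕ} (v : Fin n → ℂ) : EuclideanSpace ℂ (Fin n) :=
  (WithLp.equiv 2 (Fin n → ℂ)).symm v

theorem stmt_0 (n : ℕ) (hn : 0 < n) (M : Matrix (Fin n) (Fin n) ℂ)
    (hM : IsUnit M) (η : Fin n → ℂ)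
    (h : (1 : Matrix (Fin n) (Fin n) ℂ) - M * M.conjTranspose
        = Matrix.vecMulVec η (star η)) :
    0 < 1 - ‖euc η‖ ^ 2 := by
  classical
  set c : ℝ := ∑ i, ‖η i‖ ^ 2 with hc
  have hnorm : ‖euc η‖ ^ 2 = c := by
    rw [EuclideanSpace.norm_eq, Real.sq_sqrt (by positivity)]
    simp [euc, hc]
  rw [hnorm]
  have hs : dotProduct (star η) η = (c : ℂ) := by
    simp only [dotProduct, Pi.star_apply, hc]
    push_cast
    refine Finset.sum_congr rfl fun i _ => ?_
    rw [Complex.star_def, ← Complex.normSq_eq_conj_mul_self]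
    norm_cast
    rw [Complex.normSq_eq_norm_sq]
  set y : Fin n → ℂ := M.conjTranspose.mulVec η with hy
  have key : dotProduct (star y) y = (c : ℂ) - (c : ℂ) * c := by
    have h1 : dotProduct (star η)
        (((1 : Matrix (Fin n) (Fin n) ℂ) - M * M.conjTranspose).mulVec η)
        = (c : ℂ) - dotProduct (star y) y := by
      rw [Matrix.sub_mulVec, dotProduct_sub, Matrix.one_mulVec, hs]
      congr 1
      rw [hy, Matrix.star_mulVec, Matrix.conjTranspose_conjTranspose,
        Matrix.dotProduct_mulVec, Matrix.dotProduct_mulVec, Matrix.vecMul_vecMul]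
    have h2 : dotProduct (star η)
        ((Matrix.vecMulVec η (star η)).mulVec η) = (c : ℂ) * c := by
      have hv : (Matrix.vecMulVec η (star η)).mulVec η = fun i => η i * (c : ℂ) := by
        funext i
        simp only [Matrix.mulVec, dotProduct, Matrix.vecMulVec_apply, ← hs,
          Finset.mul_sum]
        exact Finset.sum_congr rfl fun j _ => by ring
      rw [hv]
      have : dotProduct (star η) (fun i => η i * (c : ℂ))
          = dotProduct (star η) η * c := by
        simp [dotProduct, Finset.sum_mul, mul_assoc]
      rw [this, hs]
    rw [h, h2] at h1
    linear_combination h1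
  have hre : (dotProduct (star y) y).re = ∑ i, ‖y i‖ ^ 2 := by
    simp only [dotProduct, Pi.star_apply, Complex.re_sum]
    refine Finset.sum_congr rfl fun i _ => ?_
    rw [Complex.star_def, ← Complex.normSq_eq_conj_mul_self]
    norm_cast
    rw [Complex.normSq_eq_norm_sq]
  by_cases hη : η = 0
  · have hc0 : c = 0 := by rw [hc, hη]; simp
    rw [hc0]; norm_num
  · have hcpos : 0 < c := by
      obtain ⟨i, hi⟩ : ∃ i, η i ≠ 0 := by
        by_contra hcon
        push_neg at hcon
        exact hη (funext hcon)
      exact Finset.sum_pos' (fun j _ => by positivity)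
        ⟨i, Finset.mem_univ i, pow_pos (norm_pos_iff.2 hi) 2⟩
    have hyne : y ≠ 0 := by
      have hinj : Function.Injective M.conjTranspose.mulVec :=
        Matrix.mulVec_injective_iff_isUnit.2 ((Matrix.isUnit_conjTranspose M).mpr hM)
      intro h0
      exact hη (hinj (a₁ := η) (a₂ := 0) (by simpa [Matrix.mulVec_zero] using h0))
    have hrpos : 0 < (dotProduct (star y) y).re := by
      rw [hre]
      obtain ⟨i, hi⟩ : ∃ i, y i ≠ 0 := by
        by_contra hcon
        push_neg at hcon
        exact hyne (funext hcon)
      exact Finset.sum_pos' (fun j _ => by positivity)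
        ⟨i, Finset.mem_univ i, pow_pos (norm_pos_iff.2 hi) 2⟩
    have hkey := congrArg Complex.re key
    simp only [Complex.sub_re, Complex.mul_re, Complex.ofReal_re, Complex.ofReal_im,
      mul_zero, sub_zero, zero_mul] at hkey
    nlinarith [hrpos, hkey, hcpos]
end

section
/- Let n be a positive integer, let M be an invertible complex n×n matrix, and let η be a vector in ℂⁿ such that I - M M* = η η*. Define η̃ := (1 - ‖η‖²)^{-1/2} · M* η (which is well-defined since 1 - ‖η‖² > 0). Then I - M* M = η̃ η̃*. -/
lemma aux_mul_vecMulVec {n : ℕ} (A : Matrix (Fin n) (Fin n) ℂ) (u v : Fin n → ℂ) :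
    A * Matrix.vecMulVec u v = Matrix.vecMulVec (A.mulVec u) v := by
  ext i j
  simp only [Matrix.mul_apply, Matrix.vecMulVec_apply, Matrix.mulVec, dotProduct,
    Finset.sum_mul]
  exact Finset.sum_congr rfl fun k _ => by ring

lemma aux_vecMulVec_mul {n : ℕ} (u v : Fin n → ℂ) (A : Matrix (Fin n) (Fin n) ℂ) :
    Matrix.vecMulVec u v * A = Matrix.vecMulVec u (Matrix.vecMul v A) := by
  ext i j
  simp only [Matrix.mul_apply, Matrix.vecMulVec_apply, Matrix.vecMul, dotProduct,
    Finset.mul_sum]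
  exact Finset.sum_congr rfl fun k _ => by ring

lemma aux_vecMulVec_mul_vecMulVec {n : ℕ} (u v u' v' : Fin n → ℂ) :
    Matrix.vecMulVec u v * Matrix.vecMulVec u' v'
      = (dotProduct v u') • Matrix.vecMulVec u v' := by
  ext i j
  simp only [Matrix.mul_apply, Matrix.vecMulVec_apply, Matrix.smul_apply, dotProduct,
    Finset.sum_mul, smul_eq_mul]
  exact Finset.sum_congr rfl fun k _ => by ring

lemma aux_vecMulVec_smul {n : ℕ} (a b : ℂ) (u v : Fin n → ℂ) :
    Matrix.vecMulVec (a • u) (b • v) = (a * b) • Matrix.vecMulVec u v := by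
  ext i j
  simp only [Matrix.vecMulVec_apply, Pi.smul_apply, Matrix.smul_apply, smul_eq_mul]
  ring

theorem stmt_1 (n : ℕ) (hn : 0 < n) (M : Matrix (Fin n) (Fin n) ℂ)
    (hM : IsUnit M) (η : Fin n → ℂ)
    (h : (1 : Matrix (Fin n) (Fin n) ℂ) - M * M.conjTranspose
        = Matrix.vecMulVec η (star η)) :
    (1 : Matrix (Fin n) (Fin n) ℂ) - M.conjTranspose * M
      = Matrix.vecMulVec ((Real.sqrt (1 - ‖euc η‖ ^ 2))⁻¹ • M.conjTranspose.mulVec η)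
          (star ((Real.sqrt (1 - ‖euc η‖ ^ 2))⁻¹ • M.conjTranspose.mulVec η)) := by
  classical
  set B := M.conjTranspose with hB
  set t : ℝ := ‖euc η‖ ^ 2 with ht_def
  -- basic facts about t
  have ht_sum : t = ∑ i, ‖η i‖ ^ 2 := by
    rw [ht_def, EuclideanSpace.norm_eq]
    rw [Real.sq_sqrt (by positivity)]
    rfl
  have ht_nonneg : 0 ≤ t := by rw [ht_def]; positivity
  have hdot : dotProduct (star η) η = (t : ℂ) := by
    rw [ht_sum]
    push_cast
    simp only [dotProduct, Pi.star_apply]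
    exact Finset.sum_congr rfl fun i _ => by
      rw [Complex.star_def, ← Complex.normSq_eq_conj_mul_self, Complex.normSq_eq_norm_sq]
      push_cast
      ring
  set P := Matrix.vecMulVec η (star η) with hP
  have hA : M * B = 1 - P := by rw [← h]; exact (sub_sub_cancel 1 (M * B)).symm
  -- key identity
  have hkey : M.mulVec (B.mulVec η) = ((1 - t : ℝ) : ℂ) • η := by
    rw [Matrix.mulVec_mulVec, hA, Matrix.sub_mulVec, Matrix.one_mulVec]
    have : P.mulVec η = (dotProduct (star η) η) • η := by
      ext i
      simp only [Matrix.mulVec, Matrix.vecMulVec_apply, dotProduct, Pi.smul_apply,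
        smul_eq_mul, Finset.sum_mul, Finset.mul_sum, P]
      exact Finset.sum_congr rfl fun k _ => by ring
    rw [this, hdot]
    ext i
    push_cast
    simp only [Pi.sub_apply, Pi.smul_apply, smul_eq_mul]
    ring
  -- t < 1
  have hBunit : IsUnit B := by
    rw [hB, Matrix.isUnit_iff_isUnit_det, Matrix.det_conjTranspose, isUnit_star,
      ← Matrix.isUnit_iff_isUnit_det]
    exact hM
  have ht1 : t < 1 := by
    rcases eq_or_ne η 0 with hη | hη
    · have : t = 0 := by
        rw [ht_sum]
        simp [hη]
      linarith
    · set u := B.mulVec η with hu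
      have hune : u ≠ 0 := by
        intro hcon
        apply hη
        have hinj := Matrix.mulVec_injective_iff_isUnit.2 hBunit
        have : B.mulVec η = B.mulVec 0 := by simp [← hu, hcon]
        exact hinj this
      have hsu : dotProduct (star u) u = ((1 - t : ℝ) : ℂ) * t := by
        have h1 : star u = Matrix.vecMul (star η) M := by
          rw [hu, Matrix.star_mulVec, hB, Matrix.conjTranspose_conjTranspose]
        rw [h1, ← Matrix.dotProduct_mulVec, hkey]
        rw [dotProduct_smul, hdot]
        simp [smul_eq_mul, mul_comm]
      have hsum : dotProduct (star u) u = ((∑ i, ‖u i‖ ^ 2 : ℝ) : ℂ) := by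
        push_cast
        simp only [dotProduct, Pi.star_apply]
        exact Finset.sum_congr rfl fun i _ => by
          rw [Complex.star_def, ← Complex.normSq_eq_conj_mul_self, Complex.normSq_eq_norm_sq]
          push_cast
          ring
      have hpos : 0 < ∑ i, ‖u i‖ ^ 2 := by
        have : ∃ i, u i ≠ 0 := by
          by_contra hcon
          push_neg at hcon
          exact hune (funext hcon)
        obtain ⟨i, hi⟩ := this
        have hni : 0 < ‖u i‖ := norm_pos_iff.mpr hi
        have : 0 < ‖u i‖ ^ 2 := by positivity
        exact Finset.sum_pos' (fun j _ => by positivity) ⟨i, Finset.mem_univ i, this⟩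
      have heq : (1 - t) * t = ∑ i, ‖u i‖ ^ 2 := by
        have := hsu.symm.trans hsum
        exact_mod_cast this
      nlinarith
  have hc : Real.sqrt (1 - t) > 0 := Real.sqrt_pos.2 (by linarith)
  have hc2 : (Real.sqrt (1 - t)) ^ 2 = 1 - t := Real.sq_sqrt (by linarith)
  -- reduce to cancellation
  set r : ℝ := (Real.sqrt (1 - t))⁻¹ with hr
  set u := B.mulVec η with hu
  have hsmul : r • u = ((r : ℂ)) • u := by
    ext i
    simp [Complex.real_smul]
  have hstar_u : Matrix.vecMul (star u) B = ((1 - t : ℝ) : ℂ) • star η := by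
    have h1 : Matrix.vecMul (star u) B = star (M.mulVec u) :=
      (Matrix.star_mulVec M u).symm
    rw [h1, hkey]
    ext i
    simp only [Pi.star_apply, Pi.smul_apply, smul_eq_mul, star_mul']
    push_cast
    simp [Complex.star_def, Complex.conj_ofReal]
  suffices hs : (1 : Matrix (Fin n) (Fin n) ℂ) - B * M
      = Matrix.vecMulVec (r • u) (star (r • u)) by
    exact hs
  -- cancellation via M and B
  have hcancel : M * ((1 : Matrix (Fin n) (Fin n) ℂ) - B * M) * B
      = M * (Matrix.vecMulVec (r • u) (star (r • u))) * B → 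
      (1 : Matrix (Fin n) (Fin n) ℂ) - B * M
      = Matrix.vecMulVec (r • u) (star (r • u)) := by
    intro hEq
    have h1 := hBunit.mul_right_cancel hEq
    exact hM.mul_left_cancel h1
  apply hcancel
  -- LHS
  have hPP : P * P = (t : ℂ) • P := by
    rw [hP, aux_vecMulVec_mul_vecMulVec, hdot]
  have hL : M * ((1 : Matrix (Fin n) (Fin n) ℂ) - B * M) * B
      = ((1 - t : ℝ) : ℂ) • P := by
    have e1 : M * ((1 : Matrix (Fin n) (Fin n) ℂ) - B * M) * B
        = M * B - (M * B) * (M * B) := by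
      noncomm_ring
    rw [e1, hA]
    have e2 : (1 - P) - (1 - P) * (1 - P) = P - P * P := by noncomm_ring
    rw [e2, hPP]
    push_cast
    rw [sub_smul, one_smul]
  rw [hL]
  -- RHS
  have hstar_ru : star (((r : ℂ)) • u) = ((r : ℂ)) • star u := by
    rw [star_smul]
    congr 1
    simp [Complex.star_def, Complex.conj_ofReal]
  rw [hsmul, hstar_ru, aux_vecMulVec_smul]
  rw [Matrix.mul_smul, Matrix.smul_mul]
  rw [aux_mul_vecMulVec, aux_vecMulVec_mul]
  rw [hkey, hstar_u]
  rw [aux_vecMulVec_smul, ← hP, smul_smul]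
  congr 1
  have h1t : ((1 : ℂ) - (t : ℂ)) ≠ 0 := by
    intro hcon
    have : (1 - t : ℝ) = 0 := by
      have := hcon
      push_cast at this ⊢
      exact_mod_cast this
    linarith
  have hrr : (r : ℂ) * (r : ℂ) = (((1 - t : ℝ))⁻¹ : ℂ) := by
    have hre : r * r = (1 - t)⁻¹ := by
      rw [hr, ← mul_inv, Real.mul_self_sqrt (by linarith)]
    exact_mod_cast congrArg Complex.ofReal hre
  rw [hrr]
  push_cast
  field_simp
end

section
/- Let n be a positive integer, let M be an invertible complex n×n matrix, and let η ∈ ℂⁿ satisfy I - M M* = η η*. Then for every h ∈ ℂⁿ, ‖M h‖ ≥ (1 - ‖η‖²)^{1/2} ‖h‖. -/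
theorem stmt_2 (n : ℕ) (hn : 0 < n) (M : Matrix (Fin n) (Fin n) ℂ)
    (hM : IsUnit M) (η : Fin n → ℂ)
    (h : (1 : Matrix (Fin n) (Fin n) ℂ) - M * M.conjTranspose
        = Matrix.vecMulVec η (star η)) :
    ∀ h' : Fin n → ℂ, ‖euc (M.mulVec h')‖ ≥ Real.sqrt (1 - ‖euc η‖ ^ 2) * ‖euc h'‖ := by
  intro h'
  by_cases ha : 1 - ‖euc η‖ ^ 2 ≤ 0
  · rw [Real.sqrt_eq_zero'.mpr ha, zero_mul]
    exact norm_nonneg _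
  push_neg at ha
  have hdet : IsUnit M.det := (Matrix.isUnit_iff_isUnit_det M).mp hM
  set x : Fin n → ℂ := (M.conjTranspose)⁻¹.mulVec h' with hx
  have hdetH : IsUnit (M.conjTranspose).det := by
    rw [Matrix.det_conjTranspose]; exact hdet.star
  have hh' : (M.conjTranspose).mulVec x = h' := by
    rw [hx, Matrix.mulVec_mulVec, Matrix.mul_nonsing_inv _ hdetH, Matrix.one_mulVec]
  have hMMH : M * M.conjTranspose = 1 - Matrix.vecMulVec η (star η) := by
    rw [← h]; abel
  -- the scalar t
  set t : ℂ := inner ℂ (euc η) (euc x) with ht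
  have htd : t = dotProduct (star η) x := by rw [dotProduct_comm]; rfl
  -- M h' = x - t • η
  have hMh : euc (M.mulVec h') = euc x - t • euc η := by
    have h1 : M.mulVec h' = (M * M.conjTranspose).mulVec x := by
      rw [← hh', Matrix.mulVec_mulVec]
    have h3 : (Matrix.vecMulVec η (star η)).mulVec x = fun i => t * η i := by
      funext i
      simp only [Matrix.vecMulVec, Matrix.mulVec, dotProduct, htd, Matrix.of_apply,
        Finset.mul_sum]
      rw [Finset.sum_mul]
      congr 1; funext j; ring
    rw [h1, hMMH, Matrix.sub_mulVec, Matrix.one_mulVec, h3]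
    rfl
  -- ‖h'‖² = ‖x‖² - ‖t‖²
  have hnh : ‖euc h'‖ ^ 2 = ‖euc x‖ ^ 2 - ‖t‖ ^ 2 := by
    have e1 : (inner ℂ (euc h') (euc h') : ℂ)
        = inner ℂ (euc x) (euc x) - t * (starRingEnd ℂ) t := by
      rw [EuclideanSpace.inner_eq_star_dotProduct, EuclideanSpace.inner_eq_star_dotProduct,
        dotProduct_comm _ (star _), dotProduct_comm _ (star _)]
      show dotProduct (star h') h' = dotProduct (star x) x - _
      conv_lhs => rw [← hh']
      rw [Matrix.star_mulVec, Matrix.conjTranspose_conjTranspose,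
        ← Matrix.dotProduct_mulVec, Matrix.mulVec_mulVec, hMMH,
        Matrix.sub_mulVec, Matrix.one_mulVec, dotProduct_sub]
      congr 1
      have h3 : (Matrix.vecMulVec η (star η)).mulVec x = fun i => t * η i := by
        funext i
        simp only [Matrix.vecMulVec, Matrix.mulVec, dotProduct, htd, Matrix.of_apply,
          Finset.mul_sum]
        rw [Finset.sum_mul]
        congr 1; funext j; ring
      rw [h3, htd]
      simp only [dotProduct, Pi.star_apply]
      have hc : (starRingEnd ℂ) (∑ j, star (η j) * x j) = ∑ j, star (x j) * η j := by
        rw [map_sum]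
        refine Finset.sum_congr rfl fun j _ => ?_
        simp only [map_mul, Complex.star_def, starRingEnd_self_apply]
        ring
      rw [hc, Finset.mul_sum]
      refine Finset.sum_congr rfl fun i _ => ?_
      ring
    rw [inner_self_eq_norm_sq_to_K, inner_self_eq_norm_sq_to_K,
      Complex.mul_conj'] at e1
    have e2 := congrArg Complex.re e1
    simpa [← Complex.ofReal_pow] using e2
  -- Cauchy-Schwarz
  have hcs : ‖t‖ ≤ ‖euc η‖ * ‖euc x‖ := norm_inner_le_norm _ _
  -- norm of M h'
  have hnm : ‖euc (M.mulVec h')‖ ^ 2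
      = ‖euc x‖ ^ 2 - 2 * ‖t‖ ^ 2 + ‖t‖ ^ 2 * ‖euc η‖ ^ 2 := by
    rw [hMh, @norm_sub_sq ℂ]
    have : (inner ℂ (euc x) (t • euc η) : ℂ) = t * (starRingEnd ℂ) t := by
      rw [inner_smul_right, ← inner_conj_symm, ← ht]
    rw [this, norm_smul, Complex.mul_conj']
    simp only [RCLike.re_to_complex, ← Complex.ofReal_pow, Complex.ofReal_re]
    ring
  -- final: square comparison
  have key : (1 - ‖euc η‖ ^ 2) * ‖euc h'‖ ^ 2 ≤ ‖euc (M.mulVec h')‖ ^ 2 := by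
    rw [hnh, hnm]
    have h2 : ‖t‖ ^ 2 ≤ ‖euc η‖ ^ 2 * ‖euc x‖ ^ 2 := by
      have := mul_self_le_mul_self (norm_nonneg t) hcs
      nlinarith [norm_nonneg t]
    nlinarith [sq_nonneg (‖euc η‖), sq_nonneg ‖t‖]
  calc Real.sqrt (1 - ‖euc η‖ ^ 2) * ‖euc h'‖
      = Real.sqrt ((1 - ‖euc η‖ ^ 2) * ‖euc h'‖ ^ 2) := by
        rw [Real.sqrt_mul (le_of_lt ha), Real.sqrt_sq (norm_nonneg _)]
    _ ≤ Real.sqrt (‖euc (M.mulVec h')‖ ^ 2) := Real.sqrt_le_sqrt key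
    _ = ‖euc (M.mulVec h')‖ := Real.sqrt_sq (norm_nonneg _)
end

section
/- Let n be a positive integer, let γ = (γ₁,…,γₙ) be complex numbers of modulus less than 1, set D_{γⱼ} := √(1 - |γⱼ|²), and let Mₙ(γ) be the lower-triangular n×n matrix with diagonal entries (Mₙ)_{kk} = D_{γ_k} and, for k > i, entries (Mₙ)_{ki} = -γ_i · (∏_{j=i+1}^{k-1} D_{γⱼ}) · conj(γ_k). Then I - Mₙ(γ) Mₙ(γ)* = ηₙ(γ) ηₙ(γ)*, where ηₙ(γ) is the column vector with entries conj(γ_k)·∏_{j=1}^{k-1} D_{γⱼ}. -/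
/-- The lower-triangular matrix `Mₙ(γ)` built from Schur parameters `γ`. -/
noncomputable def schurM (n : ℕ) (γ : ℕ → ℂ) : Matrix (Fin n) (Fin n) ℂ :=
  Matrix.of fun k i =>
    if (k : ℕ) = (i : ℕ) then (Real.sqrt (1 - ‖γ (k : ℕ)‖ ^ 2) : ℂ)
    else if (i : ℕ) < (k : ℕ) then
      -γ (i : ℕ) * (∏ j ∈ Finset.Ico ((i : ℕ) + 1) (k : ℕ),
          (Real.sqrt (1 - ‖γ j‖ ^ 2) : ℂ)) * (starRingEnd ℂ) (γ (k : ℕ))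
    else 0

/-- The vector `ηₙ(γ)` built from Schur parameters `γ`. -/
noncomputable def schurEta (n : ℕ) (γ : ℕ → ℂ) : Fin n → ℂ := fun k =>
  (starRingEnd ℂ) (γ (k : ℕ)) * ∏ j ∈ Finset.range (k : ℕ), (Real.sqrt (1 - ‖γ j‖ ^ 2) : ℂ)

private lemma schur_tele (c : ℕ → ℂ) (m : ℕ) :
    ∑ l ∈ Finset.range m, (1 - c l ^ 2) * ∏ j ∈ Finset.Ico (l + 1) m, c j ^ 2
      = 1 - ∏ j ∈ Finset.range m, c j ^ 2 := by
  induction m with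
  | zero => simp
  | succ m ih =>
    rw [Finset.sum_range_succ, Finset.prod_range_succ]
    have h1 : ∀ l ∈ Finset.range m, (1 - c l ^ 2) * ∏ j ∈ Finset.Ico (l + 1) (m + 1), c j ^ 2
        = ((1 - c l ^ 2) * ∏ j ∈ Finset.Ico (l + 1) m, c j ^ 2) * c m ^ 2 := by
      intro l hl
      rw [Finset.prod_Ico_succ_top (Nat.succ_le_of_lt (Finset.mem_range.mp hl))]; ring
    rw [Finset.sum_congr rfl h1, ← Finset.sum_mul, ih]
    simp only [Finset.Ico_self, Finset.prod_empty]
    ring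

private lemma schur_helper (n : ℕ) (γ : ℕ → ℂ) (hγ : ∀ j < n, ‖γ j‖ < 1)
    (k i : Fin n) (h : (i : ℕ) ≤ (k : ℕ)) :
    ∑ l : Fin n, schurM n γ k l * star (schurM n γ i l)
      = (if (k : ℕ) = (i : ℕ) then 1 else 0)
        - schurEta n γ k * star (schurEta n γ i) := by
  classical
  set c : ℕ → ℂ := fun j => ((Real.sqrt (1 - ‖γ j‖ ^ 2) : ℝ) : ℂ) with hc
  have hk : (k : ℕ) < n := k.2
  have hi : (i : ℕ) < n := i.2
  have hnn : ∀ j, j < n → (0 : ℝ) ≤ 1 - ‖γ j‖ ^ 2 := fun j hj => by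
    have := hγ j hj; nlinarith [norm_nonneg (γ j)]
  have hsq : ∀ j, j < n → c j ^ 2 = 1 - (‖γ j‖ : ℂ) ^ 2 := fun j hj => by
    simp only [hc]
    rw [← Complex.ofReal_pow, Real.sq_sqrt (hnn j hj)]
    push_cast; ring
  have hmc : ∀ j, γ j * star (γ j) = (‖γ j‖ : ℂ) ^ 2 := fun j => by
    rw [Complex.star_def, Complex.mul_conj, ← Complex.sq_norm]
    push_cast; ring
  have hstar : ∀ s : Finset ℕ, star (∏ j ∈ s, c j) = ∏ j ∈ s, c j := fun s => by
    rw [star_prod]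
    exact Finset.prod_congr rfl fun j _ => by
      simp [hc, Complex.star_def, Complex.conj_ofReal]
  set f : ℕ → ℂ := fun l =>
    (if (k : ℕ) = l then c (k : ℕ)
      else if l < (k : ℕ) then
        -γ l * (∏ j ∈ Finset.Ico (l + 1) (k : ℕ), c j) * (starRingEnd ℂ) (γ (k : ℕ))
      else 0)
    * star (if (i : ℕ) = l then c (i : ℕ)
      else if l < (i : ℕ) then
        -γ l * (∏ j ∈ Finset.Ico (l + 1) (i : ℕ), c j) * (starRingEnd ℂ) (γ (i : ℕ))
      else 0) with hf
  have h1 : ∑ l : Fin n, schurM n γ k l * star (schurM n γ i l)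
      = ∑ l ∈ Finset.range n, f l := by
    rw [← Fin.sum_univ_eq_sum_range f n]
    rfl
  have h2 : ∑ l ∈ Finset.range n, f l = ∑ l ∈ Finset.range ((i : ℕ) + 1), f l := by
    refine (Finset.sum_subset (Finset.range_subset_range.mpr hi) ?_).symm
    intro l hl hl'
    have hgt : (i : ℕ) < l := by
      have := Finset.mem_range.not.mp hl'
      omega
    simp [hf, hgt.ne, Nat.lt_asymm hgt]
  rw [h1, h2, Finset.sum_range_succ]
  set C := ∏ j ∈ Finset.Ico (i : ℕ) (k : ℕ), c j with hC
  set K := (starRingEnd ℂ) (γ (k : ℕ)) * γ (i : ℕ) * C with hK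
  have h3 : ∀ l ∈ Finset.range (i : ℕ),
      f l = K * ((1 - c l ^ 2) * ∏ j ∈ Finset.Ico (l + 1) (i : ℕ), c j ^ 2) := by
    intro l hl
    have hli : l < (i : ℕ) := Finset.mem_range.mp hl
    have hlk : l < (k : ℕ) := lt_of_lt_of_le hli h
    have e1 : f l = (-γ l * (∏ j ∈ Finset.Ico (l + 1) (k : ℕ), c j) * (starRingEnd ℂ) (γ (k : ℕ)))
        * star (-γ l * (∏ j ∈ Finset.Ico (l + 1) (i : ℕ), c j) * (starRingEnd ℂ) (γ (i : ℕ))) := by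
      simp [hf, hlk.ne', hli.ne', hlk, hli]
    have e2 : star (-γ l * (∏ j ∈ Finset.Ico (l + 1) (i : ℕ), c j) * (starRingEnd ℂ) (γ (i : ℕ)))
        = -star (γ l) * (∏ j ∈ Finset.Ico (l + 1) (i : ℕ), c j) * γ (i : ℕ) := by
      rw [star_mul, star_mul, star_neg, hstar]
      simp only [Complex.star_def, Complex.conj_conj]
      ring
    have e3 : ∏ j ∈ Finset.Ico (l + 1) (k : ℕ), c j
        = (∏ j ∈ Finset.Ico (l + 1) (i : ℕ), c j) * C :=
      (Finset.prod_Ico_consecutive c (Nat.succ_le_of_lt hli) h).symm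
    have e4 : γ l * star (γ l) = 1 - c l ^ 2 := by
      rw [hmc l, hsq l (lt_trans hli hi)]; ring
    rw [e1, e2, e3, Finset.prod_pow, hK]
    linear_combination
      ((∏ j ∈ Finset.Ico (l + 1) (i : ℕ), c j) ^ 2 * C * (starRingEnd ℂ) (γ (k : ℕ))
        * γ (i : ℕ)) * e4
  rw [Finset.sum_congr rfl h3, ← Finset.mul_sum, schur_tele]
  have heta : schurEta n γ k * star (schurEta n γ i)
      = (starRingEnd ℂ) (γ (k : ℕ)) * γ (i : ℕ)
        * ((∏ j ∈ Finset.range (i : ℕ), c j) * (∏ j ∈ Finset.range (k : ℕ), c j)) := by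
    simp only [schurEta]
    rw [star_mul, hstar]
    simp only [Complex.star_def, Complex.conj_conj]
    ring
  have hTT : ∏ j ∈ Finset.range (i : ℕ), c j ^ 2
      = (∏ j ∈ Finset.range (i : ℕ), c j) ^ 2 := Finset.prod_pow _ 2 c
  rcases eq_or_lt_of_le h with heq | hlt
  · -- i = k (as naturals)
    have hCeq : C = 1 := by rw [hC, ← heq, Finset.Ico_self, Finset.prod_empty]
    have hs : star (c (i : ℕ)) = c (i : ℕ) := by
      simp [hc, Complex.star_def, Complex.conj_ofReal]
    have hfi : f (i : ℕ) = c (i : ℕ) * c (i : ℕ) := by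
      simp only [hf]
      rw [← heq]
      simp [hs]
    have hrk : ∏ j ∈ Finset.range (k : ℕ), c j = ∏ j ∈ Finset.range (i : ℕ), c j := by
      rw [heq]
    have e4 : γ (i : ℕ) * star (γ (i : ℕ)) = 1 - c (i : ℕ) ^ 2 := by
      rw [hmc, hsq _ hi]; ring
    rw [if_pos heq.symm, hfi, heta, hK, hCeq, hrk, hTT]
    have hg : (starRingEnd ℂ) (γ (k : ℕ)) = star (γ (i : ℕ)) := by
      rw [← heq]; rfl
    rw [hg]
    linear_combination e4
  · -- i < k
    have hfi : f (i : ℕ) = (-γ (i : ℕ) * (∏ j ∈ Finset.Ico ((i : ℕ) + 1) (k : ℕ), c j)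
        * (starRingEnd ℂ) (γ (k : ℕ))) * c (i : ℕ) := by
      have hs : star (c (i : ℕ)) = c (i : ℕ) := by
        simp [hc, Complex.star_def, Complex.conj_ofReal]
      simp only [hf]
      rw [if_neg (by omega : ¬ (k : ℕ) = (i : ℕ)), if_pos hlt]
      simp [hs]
    have hCsplit : C = c (i : ℕ) * ∏ j ∈ Finset.Ico ((i : ℕ) + 1) (k : ℕ), c j :=
      Finset.prod_eq_prod_Ico_succ_bot hlt c
    have hrk : ∏ j ∈ Finset.range (k : ℕ), c j
        = (∏ j ∈ Finset.range (i : ℕ), c j) * C :=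
      (Finset.prod_range_mul_prod_Ico c h).symm
    rw [if_neg (by omega : ¬ (k : ℕ) = (i : ℕ)), hfi, heta, hK, hrk, hTT, hCsplit]
    ring

theorem stmt_7 (n : ℕ) (hn : 0 < n) (γ : ℕ → ℂ) (hγ : ∀ j < n, ‖γ j‖ < 1) :
    (1 : Matrix (Fin n) (Fin n) ℂ) - schurM n γ * (schurM n γ).conjTranspose
      = Matrix.vecMulVec (schurEta n γ) (star (schurEta n γ)) := by
  ext k i
  simp only [Matrix.sub_apply, Matrix.one_apply, Matrix.mul_apply,
    Matrix.conjTranspose_apply, Matrix.vecMulVec_apply, Pi.star_apply]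
  rcases le_or_gt (i : ℕ) (k : ℕ) with h | h
  · have hh := schur_helper n γ hγ k i h
    rw [hh]
    have : (if k = i then (1 : ℂ) else 0) = (if (k : ℕ) = (i : ℕ) then 1 else 0) := by
      simp [Fin.ext_iff]
    rw [this]
    ring
  · have hh := schur_helper n γ hγ i k h.le
    have hswap : ∑ l : Fin n, schurM n γ k l * star (schurM n γ i l)
        = star (∑ l : Fin n, schurM n γ i l * star (schurM n γ k l)) := by
      rw [star_sum]
      exact Finset.sum_congr rfl fun l _ => by rw [star_mul, star_star]
    rw [hswap, hh, star_sub, star_mul, star_star]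
    have h1 : star (if (i : ℕ) = (k : ℕ) then (1 : ℂ) else 0)
        = (if (i : ℕ) = (k : ℕ) then 1 else 0) := by
      split <;> simp
    rw [h1]
    have h2 : (if k = i then (1 : ℂ) else 0) = 0 := by
      rw [if_neg]; intro e; exact absurd (congrArg Fin.val e) (by omega)
    have h3 : (if (i : ℕ) = (k : ℕ) then (1 : ℂ) else 0) = 0 := by
      rw [if_neg]; omega
    rw [h2, h3]
    ring
end

section
/- Let n be a positive integer and let γ₁,…,γₙ be complex numbers of modulus less than 1. Then the matrix Mₙ(γ) (lower-triangular with diagonal entries √(1-|γ_k|²) and below-diagonal entries (Mₙ)_{ki} = -γ_i (∏_{j=i+1}^{k-1} √(1-|γⱼ|²)) conj(γ_k)) is invertible, and for every h ∈ ℂⁿ both ‖Mₙ(γ) h‖ ≥ (∏_{j=1}^{n} √(1-|γⱼ|²)) ‖h‖ and ‖Mₙ(γ)* h‖ ≥ (∏_{j=1}^{n} √(1-|γⱼ|²)) ‖h‖ hold. -/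
noncomputable def sr (γ : ℕ → ℂ) (j : ℕ) : ℝ := Real.sqrt (1 - ‖γ j‖ ^ 2)

lemma sr_nonneg (γ : ℕ → ℂ) (j : ℕ) : 0 ≤ sr γ j := Real.sqrt_nonneg _

lemma sr_sq (γ : ℕ → ℂ) (j : ℕ) (hj : ‖γ j‖ ≤ 1) : sr γ j ^ 2 = 1 - ‖γ j‖ ^ 2 := by
  rw [sr, Real.sq_sqrt]
  nlinarith [norm_nonneg (γ j)]

noncomputable def gseq (γ h : ℕ → ℂ) (k : ℕ) : ℂ :=
  ∑ i ∈ Finset.range k, γ i * (∏ j ∈ Finset.Ico (i+1) k, (sr γ j : ℂ)) * h i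

noncomputable def yseq (γ h : ℕ → ℂ) (k : ℕ) : ℂ :=
  (sr γ k : ℂ) * h k - (starRingEnd ℂ) (γ k) * gseq γ h k

lemma grec (γ h : ℕ → ℂ) (k : ℕ) :
    gseq γ h (k+1) = (sr γ k : ℂ) * gseq γ h k + γ k * h k := by
  unfold gseq
  rw [Finset.sum_range_succ, Finset.Ico_self, Finset.prod_empty, Finset.mul_sum]
  congr 1
  · apply Finset.sum_congr rfl
    intro i hi
    rw [Finset.prod_Ico_succ_top (Nat.succ_le_of_lt (Finset.mem_range.mp hi))]
    ring
  · ring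

lemma norm_sq_complex (z : ℂ) : ((‖z‖ : ℝ) : ℂ) ^ 2 = z * (starRingEnd ℂ) z := by
  rw [Complex.mul_conj]; norm_cast; rw [Complex.normSq_eq_norm_sq]

lemma step (γ h : ℕ → ℂ) (k : ℕ) (hk : ‖γ k‖ ≤ 1) :
    ‖yseq γ h k‖ ^ 2 + ‖gseq γ h (k+1)‖ ^ 2 = ‖h k‖ ^ 2 + ‖gseq γ h k‖ ^ 2 := by
  have hs : ((sr γ k : ℝ) : ℂ) ^ 2 + γ k * (starRingEnd ℂ) (γ k) = 1 := by
    rw [Complex.mul_conj]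
    norm_cast
    rw [sr_sq γ k hk, Complex.normSq_eq_norm_sq]
    ring
  apply Complex.ofReal_injective
  push_cast [norm_sq_complex]
  rw [yseq, grec]
  simp only [map_sub, map_add, map_mul, Complex.conj_conj, Complex.conj_ofReal]
  linear_combination (h k * (starRingEnd ℂ) (h k) + gseq γ h k * (starRingEnd ℂ) (gseq γ h k)) * hs

lemma sum_id (γ h : ℕ → ℂ) (n : ℕ) (hγ : ∀ j < n, ‖γ j‖ ≤ 1) :
    ∑ k ∈ Finset.range n, ‖yseq γ h k‖ ^ 2 + ‖gseq γ h n‖ ^ 2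
      = ∑ k ∈ Finset.range n, ‖h k‖ ^ 2 := by
  induction n with
  | zero => simp [gseq]
  | succ m ih =>
    rw [Finset.sum_range_succ, Finset.sum_range_succ]
    have h1 := ih (fun j hj => hγ j (hj.trans m.lt_succ_self))
    have h2 := step γ h m (hγ m m.lt_succ_self)
    linarith

lemma telescope (γ : ℕ → ℂ) (n : ℕ) (hγ : ∀ j < n, ‖γ j‖ ≤ 1) :
    ∑ i ∈ Finset.range n, ‖γ i‖ ^ 2 * ∏ j ∈ Finset.Ico (i+1) n, (sr γ j) ^ 2
      = 1 - ∏ j ∈ Finset.range n, (sr γ j) ^ 2 := by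
  induction n with
  | zero => simp
  | succ m ih =>
    rw [Finset.sum_range_succ, Finset.prod_range_succ, Finset.Ico_self, Finset.prod_empty]
    have h1 : ∀ i ∈ Finset.range m, ‖γ i‖ ^ 2 * ∏ j ∈ Finset.Ico (i+1) (m+1), (sr γ j) ^ 2
        = (sr γ m) ^ 2 * (‖γ i‖ ^ 2 * ∏ j ∈ Finset.Ico (i+1) m, (sr γ j) ^ 2) := by
      intro i hi
      rw [Finset.prod_Ico_succ_top (Nat.succ_le_of_lt (Finset.mem_range.mp hi))]
      ring
    rw [Finset.sum_congr rfl h1, ← Finset.mul_sum,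
      ih (fun j hj => hγ j (hj.trans m.lt_succ_self)), sr_sq γ m (hγ m m.lt_succ_self)]
    ring

lemma g_bound (γ h : ℕ → ℂ) (n : ℕ) (hγ : ∀ j < n, ‖γ j‖ ≤ 1) :
    ‖gseq γ h n‖ ^ 2 ≤ (1 - ∏ j ∈ Finset.range n, (sr γ j) ^ 2)
      * ∑ k ∈ Finset.range n, ‖h k‖ ^ 2 := by
  have h1 : ‖gseq γ h n‖ ≤
      ∑ i ∈ Finset.range n, (‖γ i‖ * ∏ j ∈ Finset.Ico (i+1) n, sr γ j) * ‖h i‖ := by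
    refine (norm_sum_le _ _).trans_eq ?_
    apply Finset.sum_congr rfl
    intro i _
    rw [norm_mul, norm_mul]
    congr 1
    congr 1
    rw [norm_prod]
    apply Finset.prod_congr rfl
    intro j _
    rw [Complex.norm_real, Real.norm_eq_abs, abs_of_nonneg (sr_nonneg γ j)]
  have h2 : ‖gseq γ h n‖ ^ 2 ≤
      (∑ i ∈ Finset.range n, (‖γ i‖ * ∏ j ∈ Finset.Ico (i+1) n, sr γ j) * ‖h i‖) ^ 2 :=
    pow_le_pow_left₀ (norm_nonneg _) h1 2
  have h3 := Finset.sum_mul_sq_le_sq_mul_sq (Finset.range n)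
    (fun i => ‖γ i‖ * ∏ j ∈ Finset.Ico (i+1) n, sr γ j) (fun i => ‖h i‖)
  have h4 : ∑ i ∈ Finset.range n, (‖γ i‖ * ∏ j ∈ Finset.Ico (i+1) n, sr γ j) ^ 2
      = 1 - ∏ j ∈ Finset.range n, (sr γ j) ^ 2 := by
    rw [← telescope γ n hγ]
    apply Finset.sum_congr rfl
    intro i _
    rw [mul_pow, Finset.prod_pow]
  calc ‖gseq γ h n‖ ^ 2 ≤ _ := h2
    _ ≤ _ := h3
    _ = _ := by rw [h4]

lemma main_bound (γ h : ℕ → ℂ) (n : ℕ) (hγ : ∀ j < n, ‖γ j‖ ≤ 1) :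
    (∏ j ∈ Finset.range n, sr γ j) ^ 2 * ∑ k ∈ Finset.range n, ‖h k‖ ^ 2
      ≤ ∑ k ∈ Finset.range n, ‖yseq γ h k‖ ^ 2 := by
  have h1 := sum_id γ h n hγ
  have h2 := g_bound γ h n hγ
  rw [← Finset.prod_pow]
  nlinarith [h1, h2]


lemma mulVec_eq (n : ℕ) (γ : ℕ → ℂ) (h : Fin n → ℂ) (k : Fin n) :
    (schurM n γ).mulVec h k
      = yseq γ (fun i => if hi : i < n then h ⟨i, hi⟩ else 0) k := by
  set H : ℕ → ℂ := fun i => if hi : i < n then h ⟨i, hi⟩ else 0 with hH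
  have hstep : (schurM n γ).mulVec h k = ∑ i ∈ Finset.range n,
      (if (k : ℕ) = i then ((sr γ (k:ℕ) : ℝ) : ℂ)
       else if i < (k : ℕ) then
         -γ i * (∏ j ∈ Finset.Ico (i + 1) (k:ℕ), ((sr γ j : ℝ) : ℂ)) * (starRingEnd ℂ) (γ (k:ℕ))
       else 0) * H i := by
    rw [Matrix.mulVec, dotProduct, ← Fin.sum_univ_eq_sum_range]
    apply Finset.sum_congr rfl
    intro i _
    have hHi : H (i : ℕ) = h i := by simp [hH, i.isLt]
    rw [hHi]
    rfl
  rw [hstep]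
  have hsub : Finset.range ((k:ℕ)+1) ⊆ Finset.range n := by
    intro x hx
    simp only [Finset.mem_range] at hx ⊢
    have := k.isLt
    omega
  rw [← Finset.sum_subset hsub (fun i hi hik => by
    simp only [Finset.mem_range] at hi hik
    rw [if_neg (by omega), if_neg (by omega), zero_mul])]
  rw [Finset.sum_range_succ, if_pos rfl, yseq, gseq, Finset.mul_sum]
  have hlow : ∀ i ∈ Finset.range (k:ℕ),
      (if (k : ℕ) = i then ((sr γ (k:ℕ) : ℝ) : ℂ)
       else if i < (k : ℕ) then
         -γ i * (∏ j ∈ Finset.Ico (i + 1) (k:ℕ), ((sr γ j : ℝ) : ℂ)) * (starRingEnd ℂ) (γ (k:ℕ))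
       else 0) * H i
      = -((starRingEnd ℂ) (γ (k:ℕ)) * (γ i * (∏ j ∈ Finset.Ico (i + 1) (k:ℕ), ((sr γ j : ℝ) : ℂ)) * H i)) := by
    intro i hi
    simp only [Finset.mem_range] at hi
    rw [if_neg (by omega), if_pos hi]
    ring
  rw [Finset.sum_congr rfl hlow, Finset.sum_neg_distrib]
  ring

lemma val_rev {n : ℕ} (i : Fin n) : (Fin.rev i : ℕ) = n - 1 - (i : ℕ) := by
  rw [Fin.val_rev]; omega

lemma entry_rev (n : ℕ) (γ : ℕ → ℂ) (k i : Fin n) :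
    (starRingEnd ℂ) (schurM n γ k i)
      = schurM n (fun j => γ (n - 1 - j)) (Fin.rev i) (Fin.rev k) := by
  have hk : (k:ℕ) < n := k.isLt
  have hi : (i:ℕ) < n := i.isLt
  unfold schurM
  simp only [Matrix.of_apply, val_rev]
  have e1 : n - 1 - (n - 1 - (k:ℕ)) = (k:ℕ) := by omega
  have e2 : n - 1 - (n - 1 - (i:ℕ)) = (i:ℕ) := by omega
  rcases lt_trichotomy (i:ℕ) (k:ℕ) with hik | hik | hik
  · rw [if_neg (by omega), if_pos hik, if_neg (by omega : ¬ (n-1-(i:ℕ) = n-1-(k:ℕ))),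
      if_pos (by omega : n-1-(k:ℕ) < n-1-(i:ℕ)), e1, e2]
    simp only [map_mul, map_neg, Complex.conj_conj, Complex.conj_ofReal, map_prod]
    have hprod : ∏ j ∈ Finset.Ico (n-1-(k:ℕ)+1) (n-1-(i:ℕ)),
        ((Real.sqrt (1 - ‖γ (n-1-j)‖ ^ 2) : ℝ) : ℂ)
        = ∏ j ∈ Finset.Ico ((i:ℕ)+1) (k:ℕ), ((Real.sqrt (1 - ‖γ j‖ ^ 2) : ℝ) : ℂ) := by
      have hr := Finset.prod_Ico_reflect (fun j => ((Real.sqrt (1 - ‖γ j‖ ^ 2) : ℝ) : ℂ))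
        (n-1-(k:ℕ)+1) (by omega : n-1-(i:ℕ) ≤ (n-1) + 1)
      have ha : n - 1 + 1 - (n-1-(i:ℕ)) = (i:ℕ)+1 := by omega
      have hb : n - 1 + 1 - (n-1-(k:ℕ)+1) = (k:ℕ) := by omega
      rw [ha, hb] at hr
      exact hr
    rw [hprod]
    ring
  · rw [if_pos hik.symm, if_pos (by omega : n-1-(i:ℕ) = n-1-(k:ℕ)), e2, Complex.conj_ofReal, hik]
  · rw [if_neg (by omega), if_neg (by omega), if_neg (by omega : ¬ (n-1-(i:ℕ) = n-1-(k:ℕ))),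
      if_neg (by omega : ¬ (n-1-(k:ℕ) < n-1-(i:ℕ))), map_zero]

lemma mulVec_star_eq (n : ℕ) (γ : ℕ → ℂ) (h : Fin n → ℂ) (i : Fin n) :
    (schurM n γ).conjTranspose.mulVec h i
      = (schurM n (fun j => γ (n - 1 - j))).mulVec (fun k => h (Fin.rev k)) (Fin.rev i) := by
  rw [Matrix.mulVec, Matrix.mulVec, dotProduct, dotProduct]
  rw [← Equiv.sum_comp (Fin.revPerm)
    (fun k => schurM n (fun j => γ (n-1-j)) (Fin.rev i) k * h (Fin.rev k))]
  apply Finset.sum_congr rfl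
  intro k _
  simp only [Fin.revPerm_apply, Fin.rev_rev]
  rw [Matrix.conjTranspose_apply, ← entry_rev]
  rfl

lemma euc_sq {n : ℕ} (v : Fin n → ℂ) : ‖euc v‖ ^ 2 = ∑ i : Fin n, ‖v i‖ ^ 2 := by
  rw [EuclideanSpace.norm_eq, Real.sq_sqrt (Finset.sum_nonneg fun i _ => sq_nonneg _)]
  apply Finset.sum_congr rfl
  intro i _
  simp [euc]

lemma schur_bound (n : ℕ) (γ : ℕ → ℂ) (hγ : ∀ j < n, ‖γ j‖ ≤ 1) (h : Fin n → ℂ) :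
    (∏ j ∈ Finset.range n, Real.sqrt (1 - ‖γ j‖ ^ 2)) * ‖euc h‖
      ≤ ‖euc ((schurM n γ).mulVec h)‖ := by
  set H : ℕ → ℂ := fun i => if hi : i < n then h ⟨i, hi⟩ else 0 with hH
  have hPsr : (∏ j ∈ Finset.range n, Real.sqrt (1 - ‖γ j‖ ^ 2)) = ∏ j ∈ Finset.range n, sr γ j := rfl
  have hP : (0:ℝ) ≤ ∏ j ∈ Finset.range n, sr γ j :=
    Finset.prod_nonneg fun j _ => sr_nonneg γ j
  rw [hPsr]
  have key : ((∏ j ∈ Finset.range n, sr γ j) * ‖euc h‖) ^ 2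
      ≤ ‖euc ((schurM n γ).mulVec h)‖ ^ 2 := by
    rw [mul_pow, euc_sq, euc_sq]
    have e1 : ∑ i : Fin n, ‖h i‖ ^ 2 = ∑ i ∈ Finset.range n, ‖H i‖ ^ 2 := by
      rw [← Fin.sum_univ_eq_sum_range (fun i => ‖H i‖ ^ 2)]
      apply Finset.sum_congr rfl
      intro i _
      simp [hH, i.isLt]
    have e2 : ∑ k : Fin n, ‖(schurM n γ).mulVec h k‖ ^ 2
        = ∑ k ∈ Finset.range n, ‖yseq γ H k‖ ^ 2 := by
      rw [← Fin.sum_univ_eq_sum_range (fun k => ‖yseq γ H k‖ ^ 2)]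
      apply Finset.sum_congr rfl
      intro k _
      rw [mulVec_eq, ← hH]
    rw [e1, e2]
    exact main_bound γ H n hγ
  have h1 := Real.sqrt_le_sqrt key
  rwa [Real.sqrt_sq (by positivity), Real.sqrt_sq (norm_nonneg _)] at h1

theorem stmt_8 (n : ℕ) (hn : 0 < n) (γ : ℕ → ℂ) (hγ : ∀ j < n, ‖γ j‖ < 1) :
    IsUnit (schurM n γ) ∧
    (∀ h : Fin n → ℂ,
      ‖euc ((schurM n γ).mulVec h)‖
        ≥ (∏ j ∈ Finset.range n, Real.sqrt (1 - ‖γ j‖ ^ 2)) * ‖euc h‖) ∧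
    (∀ h : Fin n → ℂ,
      ‖euc ((schurM n γ).conjTranspose.mulVec h)‖
        ≥ (∏ j ∈ Finset.range n, Real.sqrt (1 - ‖γ j‖ ^ 2)) * ‖euc h‖) := by
  have hγ1 : ∀ j < n, ‖γ j‖ ≤ 1 := fun j hj => (hγ j hj).le
  refine ⟨?_, fun h => schur_bound n γ hγ1 h, ?_⟩
  · rw [Matrix.isUnit_iff_isUnit_det]
    have hdet : (schurM n γ).det = ∏ i : Fin n, schurM n γ i i := by
      apply Matrix.det_of_lowerTriangular
      intro i j hij
      have hij' : (i:ℕ) < (j:ℕ) := hij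
      unfold schurM
      simp only [Matrix.of_apply]
      rw [if_neg (by omega), if_neg (by omega)]
    rw [hdet, isUnit_iff_ne_zero]
    rw [Finset.prod_ne_zero_iff]
    intro i _
    have hpos : 0 < Real.sqrt (1 - ‖γ (i:ℕ)‖ ^ 2) := by
      apply Real.sqrt_pos.mpr
      have h1 := hγ (i:ℕ) i.isLt
      nlinarith [norm_nonneg (γ (i:ℕ))]
    unfold schurM
    simp only [Matrix.of_apply]
    simp only [if_true]
    exact_mod_cast hpos.ne'
  · intro h
    rw [ge_iff_le]
    set γ' : ℕ → ℂ := fun j => γ (n - 1 - j) with hγ'def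
    have hγ'1 : ∀ j < n, ‖γ' j‖ ≤ 1 := fun j hj => hγ1 _ (by omega)
    have key := schur_bound n γ' hγ'1 (fun k => h (Fin.rev k))
    have eP : ∏ j ∈ Finset.range n, Real.sqrt (1 - ‖γ' j‖ ^ 2)
        = ∏ j ∈ Finset.range n, Real.sqrt (1 - ‖γ j‖ ^ 2) := by
      rw [hγ'def]
      exact Finset.prod_range_reflect (fun j => Real.sqrt (1 - ‖γ j‖ ^ 2)) n
    have sq_inj : ∀ a b : ℝ, 0 ≤ a → 0 ≤ b → a ^ 2 = b ^ 2 → a = b := by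
      intro a b ha hb hab
      nlinarith
    have eh : ‖euc (fun k => h (Fin.rev k))‖ = ‖euc h‖ := by
      apply sq_inj _ _ (norm_nonneg _) (norm_nonneg _)
      rw [euc_sq, euc_sq]
      exact Fintype.sum_equiv Fin.revPerm _ _ (fun i => rfl)
    have eM : ‖euc ((schurM n γ).conjTranspose.mulVec h)‖
        = ‖euc ((schurM n γ').mulVec (fun k => h (Fin.rev k)))‖ := by
      apply sq_inj _ _ (norm_nonneg _) (norm_nonneg _)
      rw [euc_sq, euc_sq]
      exact Fintype.sum_equiv Fin.revPerm _ _ (fun i => by rw [mulVec_star_eq]; rfl)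
    rw [eP, eh, ← eM] at key
    exact key
end
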